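/- Let B be the ball algebra on the closed unit ball of ℂ^d. For each f ∈ B and n ∈ ℕ, the function f_n(z) = (1/(2π)) ∫₀^{2π} f(e^{iθ} z) e^{−inθ} dθ belongs to B, is the restriction of a homogeneous polynomial of degree n, and satisfies ‖f_n‖ ≤ ‖f‖ (supremum norms). Moreover, the Cesàro means of the series Σ_n f_n converge to f in the norm of B: the functions σ_N(f) = Σ_{n=0}^{N} (1 − n/(N+1)) f_n converge uniformly on the closed ball to f as N → ∞. -/

import Mathlib

open MvPolynomial Metric

noncomputable section

abbrev Cd (d : ℕ) := EuclideanSpace ℂ (Fin d)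

abbrev CBall (d : ℕ) : Set (Cd d) := Metric.closedBall (0 : Cd d) 1

instance (d : ℕ) : CompactSpace (CBall d) :=
  isCompact_iff_compactSpace.mp (isCompact_closedBall _ _)

/-- The `i`-th coordinate function on the closed unit ball. -/
def coordFn (d : ℕ) (i : Fin d) : C(CBall d, ℂ) :=
  ⟨fun z => (z : Cd d) i, by exact (continuous_apply i).comp ((PiLp.continuous_ofLp 2 _).comp continuous_subtype_val)⟩

/-- Restriction of a polynomial to the closed unit ball, as an element of
`C(closedBall, ℂ)`. -/
def polyMap (d : ℕ) : MvPolynomial (Fin d) ℂ →ₐ[ℂ] C(CBall d, ℂ) :=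
  aeval (coordFn d)

/-- The ball algebra: the closure, in the Banach algebra of continuous functions on
the closed unit ball of ℂ^d with the supremum norm, of the restrictions of
polynomials. -/
def ballAlg (d : ℕ) : Set C(CBall d, ℂ) := closure (Set.range (polyMap d))

/-- `J` is an ideal of the ball algebra `B`. -/
def IsIdealOfBallAlg (d : ℕ) (J : Set C(CBall d, ℂ)) : Prop :=
  J ⊆ ballAlg d ∧ (0 : C(CBall d, ℂ)) ∈ J ∧
    (∀ f ∈ J, ∀ g ∈ J, f + g ∈ J) ∧ (∀ f ∈ J, ∀ g ∈ ballAlg d, g * f ∈ J)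

/-- The self-map of the closed ball given by `z ↦ t z` for `‖t‖ ≤ 1`. -/
def dilatePt (d : ℕ) (t : ℂ) (ht : ‖t‖ ≤ 1) : C(CBall d, CBall d) :=
  ⟨fun z => ⟨t • (z : Cd d), by
      have hz : ‖(z : Cd d)‖ ≤ 1 := mem_closedBall_zero_iff.mp z.2
      show t • (z : Cd d) ∈ Metric.closedBall 0 1
      rw [mem_closedBall_zero_iff, norm_smul]
      exact mul_le_one₀ ht (norm_nonneg _) hz⟩,
    by exact Continuous.subtype_mk (continuous_subtype_val.const_smul t) _⟩

/-- The dilation `f ↦ (z ↦ f (t z))` on continuous functions on the closed ball. -/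
def dilateFn (d : ℕ) (t : ℂ) (ht : ‖t‖ ≤ 1) (f : C(CBall d, ℂ)) : C(CBall d, ℂ) :=
  f.comp (dilatePt d t ht)

/-- A closed ideal of the ball algebra is homogeneous if it is invariant under all
dilations `z ↦ t z`, `|t| < 1`. -/
def IsHomogBallIdeal (d : ℕ) (J : Set C(CBall d, ℂ)) : Prop :=
  ∀ f ∈ J, ∀ t : ℂ, ∀ ht : ‖t‖ < 1, dilateFn d t ht.le f ∈ J

/-- Rotation `z ↦ e^{iθ} z` on the closed ball. -/
def rotPt (d : ℕ) (θ : ℝ) (z : CBall d) : CBall d :=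
  ⟨Complex.exp (θ * Complex.I) • (z : Cd d), by
    have hz : ‖(z : Cd d)‖ ≤ 1 := mem_closedBall_zero_iff.mp z.2
    show Complex.exp (θ * Complex.I) • (z : Cd d) ∈ Metric.closedBall 0 1
    rw [mem_closedBall_zero_iff, norm_smul]
    have h1 : ‖Complex.exp (θ * Complex.I)‖ = 1 := by
      simp [Complex.norm_exp_ofReal_mul_I θ]
    rw [h1, one_mul]
    exact hz⟩

/-- The `n`-th homogeneous component of `f` at `z`, given by the circle average
`f_n(z) = (1/(2π)) ∫₀^{2π} f(e^{iθ} z) e^{−inθ} dθ`. -/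
def circAvg (d : ℕ) (n : ℕ) (f : C(CBall d, ℂ)) (z : CBall d) : ℂ :=
  (2 * Real.pi)⁻¹ •
    ∫ θ in (0 : ℝ)..(2 * Real.pi), f (rotPt d θ z) * Complex.exp (-(n : ℂ) * θ * Complex.I)


lemma polyMap_apply (d : ℕ) (p : MvPolynomial (Fin d) ℂ) (w : CBall d) :
    polyMap d p w = MvPolynomial.eval (fun i => (w : Cd d) i) p := by
  induction p using MvPolynomial.induction_on with
  | C a => simp [polyMap]
  | add p q hp hq => simp [map_add, hp, hq]
  | mul_X p i hp =>
    rw [map_mul, ContinuousMap.mul_apply, hp, map_mul]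
    congr 1
    simp [polyMap, coordFn]

lemma eval_smul_of_isHomog {d : ℕ} {q : MvPolynomial (Fin d) ℂ} {m : ℕ}
    (hq : q.IsHomogeneous m) (t : ℂ) (x : Fin d → ℂ) :
    MvPolynomial.eval (fun i => t * x i) q = t ^ m * MvPolynomial.eval x q := by
  rw [MvPolynomial.eval_eq, MvPolynomial.eval_eq, Finset.mul_sum]
  apply Finset.sum_congr rfl
  intro s hs
  have hdeg : ∑ i ∈ s.support, s i = m := by
    have := hq (MvPolynomial.mem_support_iff.mp hs)
    simpa [Finsupp.weight, Finsupp.linearCombination, Finsupp.sum] using this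
  calc MvPolynomial.coeff s q * ∏ i ∈ s.support, (t * (x i)) ^ s i
      = MvPolynomial.coeff s q * ((∏ i ∈ s.support, t ^ s i) * ∏ i ∈ s.support, (x i) ^ s i) := by
        rw [← Finset.prod_mul_distrib]; simp [mul_pow]
    _ = t ^ m * (MvPolynomial.coeff s q * ∏ i ∈ s.support, (x i) ^ s i) := by
        rw [Finset.prod_pow_eq_pow_sum, hdeg]; ring

lemma keyExpand (d : ℕ) (p : MvPolynomial (Fin d) ℂ) (t : ℂ) (ht : ‖t‖ ≤ 1) (z : CBall d) :
    polyMap d p (dilatePt d t ht z) =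
      ∑ m ∈ Finset.range (p.totalDegree + 1),
        t ^ m * polyMap d (MvPolynomial.homogeneousComponent m p) z := by
  conv_lhs => rw [← MvPolynomial.sum_homogeneousComponent p]
  rw [map_sum]
  rw [ContinuousMap.sum_apply]
  refine Finset.sum_congr rfl fun m _ => ?_
  rw [polyMap_apply, polyMap_apply]
  have hc : (fun i => ((dilatePt d t ht z : CBall d) : Cd d) i) = fun i => t * (z : Cd d) i := rfl
  rw [hc, eval_smul_of_isHomog (MvPolynomial.homogeneousComponent_isHomogeneous m p) t]

lemma norm_exp_theta_I (θ : ℝ) : ‖Complex.exp ((θ:ℂ) * Complex.I)‖ = 1 := by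
  simpa using Complex.abs_exp_ofReal_mul_I θ

lemma rotPt_eq_dilatePt (d : ℕ) (θ : ℝ) (z : CBall d) :
    rotPt d θ z = dilatePt d (Complex.exp ((θ:ℂ) * Complex.I)) (le_of_eq (norm_exp_theta_I θ)) z := rfl

lemma continuous_rot (d : ℕ) (f : C(CBall d, ℂ)) (z : CBall d) :
    Continuous fun θ : ℝ => f (rotPt d θ z) := by
  apply f.continuous.comp
  apply Continuous.subtype_mk
  exact (Complex.continuous_exp.comp (Complex.continuous_ofReal.mul continuous_const)).smul
    continuous_const

lemma continuous_integrand (d : ℕ) (n : ℕ) (f : C(CBall d, ℂ)) (z : CBall d) :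
    Continuous fun θ : ℝ => f (rotPt d θ z) * Complex.exp (-(n:ℂ) * θ * Complex.I) := by
  apply (continuous_rot d f z).mul
  apply Complex.continuous_exp.comp
  exact (continuous_const.mul Complex.continuous_ofReal).mul continuous_const

lemma circAvg_norm_le (d : ℕ) (n : ℕ) (h : C(CBall d, ℂ)) (z : CBall d) :
    ‖circAvg d n h z‖ ≤ ‖h‖ := by
  rw [circAvg, norm_smul]
  have hb : ∀ θ ∈ Set.uIoc (0:ℝ) (2*Real.pi),
      ‖h (rotPt d θ z) * Complex.exp (-(n:ℂ) * θ * Complex.I)‖ ≤ ‖h‖ := by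
    intro θ _
    rw [norm_mul]
    have he : ‖Complex.exp (-(n:ℂ) * θ * Complex.I)‖ = 1 := by
      have : (-(n:ℂ) * θ) = ((-(n * θ) : ℝ) : ℂ) := by push_cast; ring
      rw [this]; simpa using Complex.norm_exp_ofReal_mul_I (-(n*θ))
    rw [he, mul_one]
    exact h.norm_coe_le_norm _
  have := intervalIntegral.norm_integral_le_of_norm_le_const (C := ‖h‖) (a := 0)
    (b := 2*Real.pi) hb
  have hpi : (0:ℝ) < 2 * Real.pi := by positivity
  calc ‖(2*Real.pi)⁻¹‖ * ‖∫ θ in (0:ℝ)..(2*Real.pi), h (rotPt d θ z) * Complex.exp (-(n:ℂ) * θ * Complex.I)‖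
      ≤ (2*Real.pi)⁻¹ * (‖h‖ * |2*Real.pi - 0|) := by
        rw [Real.norm_eq_abs, abs_of_pos (by positivity)]
        exact mul_le_mul_of_nonneg_left this (by positivity)
    _ = ‖h‖ := by rw [sub_zero, abs_of_pos hpi]; field_simp

lemma circAvg_sub (d : ℕ) (n : ℕ) (h₁ h₂ : C(CBall d, ℂ)) (z : CBall d) :
    circAvg d n (h₁ - h₂) z = circAvg d n h₁ z - circAvg d n h₂ z := by
  rw [circAvg, circAvg, circAvg, ← smul_sub]
  congr 1
  rw [← intervalIntegral.integral_sub
    ((continuous_integrand d n h₁ z).intervalIntegrable _ _)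
    ((continuous_integrand d n h₂ z).intervalIntegrable _ _)]
  congr 1 with θ
  simp [sub_mul]

lemma integral_exp_diff (m n : ℕ) :
    (∫ θ in (0:ℝ)..(2*Real.pi), Complex.exp ((((m:ℂ) - n) * Complex.I) * θ))
      = if m = n then (2*Real.pi : ℂ) else 0 := by
  rcases eq_or_ne m n with h | h
  · subst h
    simp only [sub_self, zero_mul, Complex.exp_zero, if_pos rfl]
    simp [intervalIntegral.integral_const]
  · have hmn : ((m:ℂ) - n) ≠ 0 := sub_ne_zero.mpr (by exact_mod_cast h)
    have hc : (((m:ℂ) - n) * Complex.I) ≠ 0 := mul_ne_zero hmn Complex.I_ne_zero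
    rw [if_neg h, integral_exp_mul_complex hc]
    have h2 : (((m:ℂ) - n) * Complex.I) * ((2*Real.pi : ℝ) : ℂ)
        = (((m:ℤ) - (n:ℤ) : ℤ) : ℂ) * (2 * Real.pi * Complex.I) := by push_cast; ring
    rw [h2, Complex.exp_int_mul_two_pi_mul_I]
    simp

lemma circAvg_polyMap (d n : ℕ) (p : MvPolynomial (Fin d) ℂ) (z : CBall d) :
    circAvg d n (polyMap d p) z = polyMap d (MvPolynomial.homogeneousComponent n p) z := by
  have hint : ∀ θ : ℝ, polyMap d p (rotPt d θ z) * Complex.exp (-(n:ℂ) * θ * Complex.I)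
      = ∑ m ∈ Finset.range (p.totalDegree + 1),
          polyMap d (MvPolynomial.homogeneousComponent m p) z
            * Complex.exp ((((m:ℂ) - n) * Complex.I) * θ) := by
    intro θ
    rw [rotPt_eq_dilatePt, keyExpand, Finset.sum_mul]
    refine Finset.sum_congr rfl fun m _ => ?_
    have harg : (m:ℂ) * ((θ:ℂ) * Complex.I) + (-(n:ℂ) * θ * Complex.I)
        = (((m:ℂ) - n) * Complex.I) * θ := by ring
    rw [← Complex.exp_nat_mul, mul_right_comm, ← Complex.exp_add, harg]
    exact mul_comm _ _
  rw [circAvg]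
  simp only [hint]
  rw [intervalIntegral.integral_finset_sum (fun m _ =>
    (Continuous.intervalIntegrable (by fun_prop) _ _))]
  simp only [intervalIntegral.integral_const_mul, integral_exp_diff, mul_ite, mul_zero]
  rw [Finset.sum_ite_eq' (Finset.range (p.totalDegree + 1)) n]
  by_cases hn : n ∈ Finset.range (p.totalDegree + 1)
  · rw [if_pos hn, Complex.real_smul]
    have : ((2*Real.pi : ℝ) : ℂ) ≠ 0 := by
      simpa using Real.pi_ne_zero
    push_cast
    field_simp
  · rw [if_neg hn, smul_zero]
    have : MvPolynomial.homogeneousComponent n p = 0 := by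
      apply MvPolynomial.homogeneousComponent_eq_zero
      simp only [Finset.mem_range] at hn
      omega
    rw [this, map_zero]
    rfl

open Filter Topology in
lemma exists_homog_rep (d n : ℕ) (f : C(CBall d, ℂ)) (hf : f ∈ ballAlg d) :
    ∃ q : MvPolynomial (Fin d) ℂ, q.IsHomogeneous n ∧
      ∀ z : CBall d, polyMap d q z = circAvg d n f z := by
  obtain ⟨u, hu_mem, hu_tend⟩ := mem_closure_iff_seq_limit.mp hf
  choose p hp using hu_mem
  set v : ℕ → C(CBall d, ℂ) :=
    fun k => polyMap d (MvPolynomial.homogeneousComponent n (p k)) with hv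
  have hvz : ∀ k z, v k z = circAvg d n (u k) z := by
    intro k z
    rw [hv]
    simp only
    rw [← circAvg_polyMap, hp k]
  have key : ∀ k l : ℕ, ∀ z, ‖v k z - v l z‖ ≤ ‖u k - u l‖ := by
    intro k l z
    rw [hvz, hvz, ← circAvg_sub]
    exact circAvg_norm_le d n _ z
  have keyN : ∀ k l : ℕ, ‖v k - v l‖ ≤ ‖u k - u l‖ := by
    intro k l
    refine (ContinuousMap.norm_le _ (norm_nonneg _)).mpr fun z => ?_
    rw [ContinuousMap.sub_apply]; exact key k l z
  have hcau : CauchySeq v := by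
    rw [Metric.cauchySeq_iff]
    intro ε hε
    obtain ⟨N, hN⟩ := Metric.cauchySeq_iff.mp hu_tend.cauchySeq ε hε
    refine ⟨N, fun k hk l hl => ?_⟩
    have := hN k hk l hl
    rw [dist_eq_norm] at this ⊢
    exact lt_of_le_of_lt (keyN k l) this
  obtain ⟨g, hg⟩ := cauchySeq_tendsto_of_complete hcau
  set V : Submodule ℂ C(CBall d, ℂ) :=
    Submodule.map (polyMap d).toLinearMap (MvPolynomial.homogeneousSubmodule (Fin d) ℂ n) with hV
  haveI hfd : FiniteDimensional ℂ (MvPolynomial.homogeneousSubmodule (Fin d) ℂ n) := by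
    apply Submodule.finiteDimensional_of_le
      (S₂ := MvPolynomial.restrictTotalDegree (Fin d) ℂ n)
    intro q hq
    rw [MvPolynomial.mem_restrictTotalDegree]
    exact ((MvPolynomial.mem_homogeneousSubmodule _ _).mp hq).totalDegree_le
  haveI : FiniteDimensional ℂ V := Module.Finite.map _ _
  have hVclosed : IsClosed (V : Set C(CBall d, ℂ)) := Submodule.closed_of_finiteDimensional V
  have hgV : g ∈ V := hVclosed.mem_of_tendsto hg (Filter.Eventually.of_forall fun k =>
    ⟨_, (MvPolynomial.mem_homogeneousSubmodule _ _).mpr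
      (MvPolynomial.homogeneousComponent_isHomogeneous n (p k)), rfl⟩)
  obtain ⟨q, hqmem, hqeq⟩ := hgV
  refine ⟨q, (MvPolynomial.mem_homogeneousSubmodule _ _).mp hqmem, fun z => ?_⟩
  have h1 : Tendsto (fun k => v k z) atTop (𝓝 (g z)) :=
    ((continuous_eval_const z).tendsto g).comp hg
  have h2 : Tendsto (fun k => v k z) atTop (𝓝 (circAvg d n f z)) := by
    have hb : ∀ k, ‖v k z - circAvg d n f z‖ ≤ ‖u k - f‖ := by
      intro k; rw [hvz, ← circAvg_sub]; exact circAvg_norm_le d n _ z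
    have h0 : Tendsto (fun k => ‖u k - f‖) atTop (𝓝 0) :=
      (tendsto_iff_norm_sub_tendsto_zero.mp hu_tend)
    have := squeeze_zero_norm hb h0
    rwa [tendsto_sub_nhds_zero_iff] at this
  have : g z = circAvg d n f z := tendsto_nhds_unique h1 h2
  rw [← this, ← hqeq]
  rfl

open Finset in
lemma ortho_sum {M : ℕ} (hM : 0 < M) (t : ℤ) :
    ∑ j ∈ range M, Complex.exp (2 * Real.pi * Complex.I / M) ^ ((j:ℤ) * t)
      = if (M:ℤ) ∣ t then (M:ℂ) else 0 := by
  set ζ := Complex.exp (2 * Real.pi * Complex.I / M) with hζ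
  have hprim : IsPrimitiveRoot ζ M := Complex.isPrimitiveRoot_exp M hM.ne'
  have hrw : ∀ j : ℕ, ζ ^ ((j:ℤ) * t) = (ζ ^ t) ^ j := by
    intro j
    rw [mul_comm, zpow_mul, zpow_natCast]
  simp only [hrw]
  rcases em ((M:ℤ) ∣ t) with h | h
  · rw [if_pos h]
    have : ζ ^ t = 1 := (hprim.zpow_eq_one_iff_dvd t).mpr h
    simp [this]
  · rw [if_neg h]
    have hne : ζ ^ t ≠ 1 := fun hh => h ((hprim.zpow_eq_one_iff_dvd t).mp hh)
    rw [geom_sum_eq hne]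
    have : (ζ ^ t) ^ M = 1 := by
      rw [← zpow_natCast, ← zpow_mul, mul_comm, zpow_mul, zpow_natCast, hprim.pow_eq_one, one_zpow]
    rw [this, sub_self, zero_div]

lemma abs_zeta_one {M : ℕ} (hM : 0 < M) :
    ‖Complex.exp (2 * Real.pi * Complex.I / M)‖ = 1 := by
  have : (2 * Real.pi * Complex.I / M : ℂ) = ((2 * Real.pi / M : ℝ) : ℂ) * Complex.I := by
    push_cast; ring
  rw [this, Complex.norm_exp_ofReal_mul_I]

lemma conj_zeta_pow {M : ℕ} (hM : 0 < M) (t : ℤ) :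
    (starRingEnd ℂ) (Complex.exp (2 * Real.pi * Complex.I / M) ^ t)
      = Complex.exp (2 * Real.pi * Complex.I / M) ^ (-t) := by
  set ζ := Complex.exp (2 * Real.pi * Complex.I / M) with hζ
  have h1 : (starRingEnd ℂ) ζ = ζ⁻¹ := by
    have habs : Complex.normSq ζ = 1 := by
      rw [← Complex.sq_norm, abs_zeta_one hM]; norm_num
    have : ζ * (starRingEnd ℂ) ζ = 1 := by rw [Complex.mul_conj, habs]; norm_num
    exact eq_inv_of_mul_eq_one_right this
  rw [map_zpow₀, h1, inv_zpow, ← zpow_neg]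

lemma dvd_iff_eq_of_bounds {M N D : ℕ} (hM : N + D < M) {k l m : ℕ}
    (hk : k < N + 1) (hl : l < N + 1) (hm : m < D + 1) :
    ((M:ℤ) ∣ ((k:ℤ) + m - l)) ↔ l = k + m := by
  constructor
  · rintro ⟨c, hc⟩
    have hMpos : (0:ℤ) < M := by omega
    have hlt : (k:ℤ) + m - l < M := by omega
    have hgt : -(M:ℤ) < (k:ℤ) + m - l := by omega
    rw [hc] at hlt hgt
    have hc0 : c = 0 := by
      rcases lt_trichotomy c 0 with h | h | h
      · exfalso; nlinarith
      · exact h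
      · exfalso; nlinarith
    rw [hc0, mul_zero] at hc
    omega
  · intro h
    rw [h]
    push_cast
    simp

open Finset in
lemma fejer_identity {M N D : ℕ} (hM : N + D < M) (a : ℕ → ℂ) :
    ∑ j ∈ range M, ((Complex.normSq (∑ k ∈ range (N+1),
        Complex.exp (2 * Real.pi * Complex.I / M) ^ ((j:ℤ) * k)) : ℂ)
      * ∑ m ∈ range (D+1), Complex.exp (2 * Real.pi * Complex.I / M) ^ ((j:ℤ) * m) * a m)
    = (M:ℂ) * ∑ m ∈ range (D+1), ((N + 1 - m : ℕ) : ℂ) * a m := by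
  have hMpos : 0 < M := by omega
  set ζ := Complex.exp (2 * Real.pi * Complex.I / M) with hζ
  have hζ0 : ζ ≠ 0 := Complex.exp_ne_zero _
  have S1 : ∀ j : ℕ,
      ((Complex.normSq (∑ k ∈ range (N+1), ζ ^ ((j:ℤ) * k)) : ℂ)
        * ∑ m ∈ range (D+1), ζ ^ ((j:ℤ) * m) * a m)
      = ∑ k ∈ range (N+1), ∑ l ∈ range (N+1), ∑ m ∈ range (D+1),
          ζ ^ ((j:ℤ) * ((k:ℤ) + m - l)) * a m := by
    intro j
    rw [← Complex.mul_conj]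
    rw [map_sum]
    simp only [hζ, conj_zeta_pow hMpos]
    rw [Finset.sum_mul_sum]
    rw [Finset.sum_mul]
    refine sum_congr rfl fun k _ => ?_
    rw [Finset.sum_mul]
    refine sum_congr rfl fun l _ => ?_
    rw [Finset.mul_sum]
    refine sum_congr rfl fun m _ => ?_
    rw [← hζ, ← mul_assoc]
    congr 1
    rw [← zpow_add₀ hζ0, ← zpow_add₀ hζ0]
    congr 1
    push_cast
    ring
  calc ∑ j ∈ range M, ((Complex.normSq (∑ k ∈ range (N+1), ζ ^ ((j:ℤ) * k)) : ℂ)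
        * ∑ m ∈ range (D+1), ζ ^ ((j:ℤ) * m) * a m)
      = ∑ j ∈ range M, ∑ k ∈ range (N+1), ∑ l ∈ range (N+1), ∑ m ∈ range (D+1),
          ζ ^ ((j:ℤ) * ((k:ℤ) + m - l)) * a m := sum_congr rfl fun j _ => S1 j
    _ = ∑ k ∈ range (N+1), ∑ l ∈ range (N+1), ∑ m ∈ range (D+1),
          (∑ j ∈ range M, ζ ^ ((j:ℤ) * ((k:ℤ) + m - l))) * a m := by
        rw [Finset.sum_comm]
        refine sum_congr rfl fun k _ => ?_
        rw [Finset.sum_comm]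
        refine sum_congr rfl fun l _ => ?_
        rw [Finset.sum_comm]
        refine sum_congr rfl fun m _ => ?_
        rw [Finset.sum_mul]
    _ = ∑ k ∈ range (N+1), ∑ m ∈ range (D+1),
          (if k + m ∈ range (N+1) then (M:ℂ) * a m else 0) := by
        refine sum_congr rfl fun k hk => ?_
        rw [Finset.sum_comm]
        refine sum_congr rfl fun m hm => ?_
        have step : ∀ l ∈ range (N+1),
            (∑ j ∈ range M, ζ ^ ((j:ℤ) * ((k:ℤ) + m - l))) * a m
            = if l = k + m then (M:ℂ) * a m else 0 := by
          intro l hl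
          rw [ortho_sum hMpos]
          rw [if_congr (dvd_iff_eq_of_bounds hM (mem_range.mp hk) (mem_range.mp hl)
            (mem_range.mp hm)) rfl rfl]
          rw [ite_mul, zero_mul]
        rw [sum_congr rfl step, Finset.sum_ite_eq' (range (N+1)) (k+m)]
    _ = ∑ m ∈ range (D+1), ∑ k ∈ range (N+1),
          (if k ∈ range (N+1-m) then (M:ℂ) * a m else 0) := by
        rw [Finset.sum_comm]
        refine sum_congr rfl fun m _ => sum_congr rfl fun k _ => ?_
        refine if_congr ?_ rfl rfl
        simp only [mem_range]
        omega
    _ = ∑ m ∈ range (D+1), ((N + 1 - m : ℕ) : ℂ) * ((M:ℂ) * a m) := by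
        refine sum_congr rfl fun m _ => ?_
        rw [Finset.sum_ite_mem]
        rw [Finset.inter_eq_right.mpr (Finset.range_subset_range.mpr (by omega))]
        rw [Finset.sum_const, Finset.card_range, nsmul_eq_mul]
    _ = (M:ℂ) * ∑ m ∈ range (D+1), ((N + 1 - m : ℕ) : ℂ) * a m := by
        rw [Finset.mul_sum]
        refine sum_congr rfl fun m _ => by ring

open Finset in
lemma fejer_bound (d N : ℕ) (p : MvPolynomial (Fin d) ℂ) (z : CBall d) :
    ‖∑ n ∈ range (N+1), ((N + 1 - n : ℕ) : ℂ) *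
        polyMap d (MvPolynomial.homogeneousComponent n p) z‖
      ≤ ((N:ℝ) + 1) * ‖polyMap d p‖ := by
  set D := p.totalDegree with hD
  set M := N + D + 1 with hMdef
  have hM : N + D < M := by omega
  have hMpos : 0 < M := by omega
  set ζ := Complex.exp (2 * Real.pi * Complex.I / M) with hζ
  set a : ℕ → ℂ := fun m => polyMap d (MvPolynomial.homogeneousComponent m p) z with ha
  set T : ℕ → ℂ := fun j => ∑ k ∈ range (N+1), ζ ^ ((j:ℤ) * k) with hT
  have hζj : ∀ j : ℕ, ‖ζ ^ j‖ ≤ 1 := by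
    intro j
    rw [norm_pow, abs_zeta_one hMpos, one_pow]
  have hexp : ∀ j m : ℕ, (ζ ^ j) ^ m = ζ ^ ((j:ℤ) * m) := by
    intro j m
    rw [← pow_mul, ← zpow_natCast]
    norm_cast
  have hQ : ∀ j : ℕ, (∑ m ∈ range (D+1), ζ ^ ((j:ℤ) * m) * a m)
      = polyMap d p (dilatePt d (ζ ^ j) (hζj j) z) := by
    intro j
    rw [keyExpand]
    exact (sum_congr rfl fun m _ => by rw [hexp]).symm
  have hQle : ∀ j : ℕ, ‖∑ m ∈ range (D+1), ζ ^ ((j:ℤ) * m) * a m‖ ≤ ‖polyMap d p‖ := by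
    intro j
    rw [hQ]
    exact (polyMap d p).norm_coe_le_norm _
  have hid := fejer_identity (M := M) (N := N) (D := D) hM a
  rw [← hζ] at hid
  have hid1 := fejer_identity (M := M) (N := N) (D := 0) (by omega) (fun _ => (1:ℂ))
  rw [← hζ] at hid1
  simp only [zero_add, Finset.sum_range_one, Nat.cast_zero, mul_zero, zpow_zero, mul_one,
    Nat.sub_zero, one_mul] at hid1
  -- hid1 : ∑ j ∈ range M, (normSq (T j) : ℂ) = M * (N+1)
  have hFsumR : ∑ j ∈ range M, Complex.normSq (T j) = (M:ℝ) * ((N:ℝ) + 1) := by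
    have h2 : ((∑ j ∈ range M, Complex.normSq (T j) : ℝ) : ℂ)
        = (((M:ℝ) * ((N:ℝ) + 1) : ℝ) : ℂ) := by
      push_cast at hid1 ⊢
      rw [hid1]
    exact_mod_cast h2
  have hEq : ∑ n ∈ range (N+1), ((N + 1 - n : ℕ) : ℂ) * a n
      = ∑ m ∈ range (D+1), ((N + 1 - m : ℕ) : ℂ) * a m := by
    have h1 : ∑ n ∈ range (N+1), ((N + 1 - n : ℕ) : ℂ) * a n
        = ∑ n ∈ range (max N D + 1), ((N + 1 - n : ℕ) : ℂ) * a n := by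
      apply Finset.sum_subset (Finset.range_subset_range.mpr (by omega))
      intro x _ hx
      simp only [mem_range] at hx
      have : N + 1 - x = 0 := by omega
      rw [this]
      simp
    have h2 : ∑ n ∈ range (D+1), ((N + 1 - n : ℕ) : ℂ) * a n
        = ∑ n ∈ range (max N D + 1), ((N + 1 - n : ℕ) : ℂ) * a n := by
      apply Finset.sum_subset (Finset.range_subset_range.mpr (by omega))
      intro x _ hx
      simp only [mem_range] at hx
      have hx' : D < x := by omega
      have : MvPolynomial.homogeneousComponent x p = 0 := by
        apply MvPolynomial.homogeneousComponent_eq_zero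
        exact hx'
      simp only [ha, this, map_zero]
      simp
    rw [h1, ← h2]
  rw [hEq]
  have key : (M:ℝ) * ‖∑ m ∈ range (D+1), ((N + 1 - m : ℕ) : ℂ) * a m‖
      ≤ (M:ℝ) * (((N:ℝ) + 1) * ‖polyMap d p‖) := by
    calc (M:ℝ) * ‖∑ m ∈ range (D+1), ((N + 1 - m : ℕ) : ℂ) * a m‖
        = ‖(M:ℂ) * ∑ m ∈ range (D+1), ((N + 1 - m : ℕ) : ℂ) * a m‖ := by
          rw [norm_mul]
          simp
      _ = ‖∑ j ∈ range M, ((Complex.normSq (T j) : ℂ)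
            * ∑ m ∈ range (D+1), ζ ^ ((j:ℤ) * m) * a m)‖ := by rw [hid]
      _ ≤ ∑ j ∈ range M, ‖(Complex.normSq (T j) : ℂ)
            * ∑ m ∈ range (D+1), ζ ^ ((j:ℤ) * m) * a m‖ := norm_sum_le _ _
      _ ≤ ∑ j ∈ range M, Complex.normSq (T j) * ‖polyMap d p‖ := by
          apply sum_le_sum
          intro j _
          rw [norm_mul]
          have h3 : ‖(Complex.normSq (T j) : ℂ)‖ = Complex.normSq (T j) := by
            rw [Complex.norm_real, Real.norm_eq_abs, abs_of_nonneg (Complex.normSq_nonneg _)]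
          rw [h3]
          exact mul_le_mul_of_nonneg_left (hQle j) (Complex.normSq_nonneg _)
      _ = (∑ j ∈ range M, Complex.normSq (T j)) * ‖polyMap d p‖ := by rw [← Finset.sum_mul]
      _ = (M:ℝ) * (((N:ℝ) + 1) * ‖polyMap d p‖) := by rw [hFsumR]; ring
  exact le_of_mul_le_mul_left key (by positivity)

open Filter Topology Finset in
lemma cesaro_bound (d N : ℕ) (h : C(CBall d, ℂ)) (hh : h ∈ ballAlg d) (z : CBall d) :
    ‖∑ n ∈ range (N+1), ((N + 1 - n : ℕ) : ℂ) * circAvg d n h z‖ ≤ ((N:ℝ) + 1) * ‖h‖ := by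
  obtain ⟨u, hu_mem, hu_tend⟩ := mem_closure_iff_seq_limit.mp hh
  choose p hp using hu_mem
  have hΨ : Tendsto (fun k => ∑ n ∈ range (N+1), ((N + 1 - n : ℕ) : ℂ) * circAvg d n (u k) z)
      atTop (𝓝 (∑ n ∈ range (N+1), ((N + 1 - n : ℕ) : ℂ) * circAvg d n h z)) := by
    apply tendsto_finset_sum
    intro n _
    apply Filter.Tendsto.const_mul
    have hb : ∀ k, ‖circAvg d n (u k) z - circAvg d n h z‖ ≤ ‖u k - h‖ := by
      intro k
      rw [← circAvg_sub]
      exact circAvg_norm_le d n _ z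
    have h0 : Tendsto (fun k => ‖u k - h‖) atTop (𝓝 0) :=
      tendsto_iff_norm_sub_tendsto_zero.mp hu_tend
    have := squeeze_zero_norm hb h0
    rwa [tendsto_sub_nhds_zero_iff] at this
  have hb : ∀ k, ‖∑ n ∈ range (N+1), ((N + 1 - n : ℕ) : ℂ) * circAvg d n (u k) z‖
      ≤ ((N:ℝ) + 1) * ‖u k‖ := by
    intro k
    have heq : ∀ n, circAvg d n (u k) z
        = polyMap d (MvPolynomial.homogeneousComponent n (p k)) z := by
      intro n
      rw [← hp k, circAvg_polyMap]
    calc ‖∑ n ∈ range (N+1), ((N + 1 - n : ℕ) : ℂ) * circAvg d n (u k) z‖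
        = ‖∑ n ∈ range (N+1), ((N + 1 - n : ℕ) : ℂ) *
            polyMap d (MvPolynomial.homogeneousComponent n (p k)) z‖ := by
          congr 1
          exact sum_congr rfl fun n _ => by rw [heq]
      _ ≤ ((N:ℝ) + 1) * ‖polyMap d (p k)‖ := fejer_bound d N (p k) z
      _ = ((N:ℝ) + 1) * ‖u k‖ := by rw [hp k]
  have hlim2 : Tendsto (fun k => ((N:ℝ) + 1) * ‖u k‖) atTop (𝓝 (((N:ℝ) + 1) * ‖h‖)) :=
    (hu_tend.norm).const_mul _
  exact le_of_tendsto_of_tendsto' hΨ.norm hlim2 hb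

open Finset in
lemma cesaro_smul_eq (N : ℕ) (x : ℕ → ℂ) :
    ∑ n ∈ range (N+1), ((1:ℝ) - (n:ℝ)/((N:ℝ)+1)) • x n
      = ((((N:ℝ)+1) : ℂ))⁻¹ * ∑ n ∈ range (N+1), ((N + 1 - n : ℕ) : ℂ) * x n := by
  rw [Finset.mul_sum]
  refine sum_congr rfl fun n hn => ?_
  have hn' : n ≤ N := by simpa [Nat.lt_succ_iff] using hn
  rw [Complex.real_smul, Nat.cast_sub (by omega : n ≤ N + 1)]
  have hne : ((N:ℂ) + 1) ≠ 0 := by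
    have : ((N:ℝ) + 1) ≠ 0 := by positivity
    exact_mod_cast this
  push_cast
  field_simp

open Finset in
lemma cesaro_bound' (d N : ℕ) (h : C(CBall d, ℂ)) (hh : h ∈ ballAlg d) (z : CBall d) :
    ‖∑ n ∈ range (N+1), ((1:ℝ) - (n:ℝ)/((N:ℝ)+1)) • circAvg d n h z‖ ≤ ‖h‖ := by
  rw [cesaro_smul_eq, norm_mul, norm_inv]
  have h1 : ‖((N:ℝ):ℂ) + 1‖ = (N:ℝ) + 1 := by
    have e : ((N:ℝ):ℂ) + 1 = (((N:ℝ) + 1 : ℝ):ℂ) := by push_cast; ring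
    rw [e, Complex.norm_real, Real.norm_eq_abs, abs_of_pos (by positivity)]
  rw [h1]
  calc (((N:ℝ)+1))⁻¹ * ‖∑ n ∈ range (N+1), ((N + 1 - n : ℕ) : ℂ) * circAvg d n h z‖
      ≤ (((N:ℝ)+1))⁻¹ * (((N:ℝ)+1) * ‖h‖) := by
        apply mul_le_mul_of_nonneg_left (cesaro_bound d N h hh z) (by positivity)
    _ = ‖h‖ := by field_simp

lemma ballAlg_sub_mem (d : ℕ) {f g : C(CBall d, ℂ)} (hf : f ∈ ballAlg d)
    (hg : g ∈ ballAlg d) : f - g ∈ ballAlg d := by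
  have hset : Set.range (polyMap d) = ↑(LinearMap.range (polyMap d).toLinearMap) := by
    ext x
    simp [LinearMap.mem_range]
  have hball : ballAlg d
      = ↑((LinearMap.range (polyMap d).toLinearMap).topologicalClosure) := by
    rw [ballAlg, hset, Submodule.topologicalClosure_coe]
  rw [hball] at hf hg ⊢
  exact Submodule.sub_mem _ hf hg

open Filter Topology Finset in
lemma cesaro_poly_tendsto (d : ℕ) (p : MvPolynomial (Fin d) ℂ) :
    Tendsto (fun N : ℕ => ∑ n ∈ range (N+1),
      ((1:ℝ) - (n:ℝ)/((N:ℝ)+1)) • polyMap d (MvPolynomial.homogeneousComponent n p))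
      atTop (𝓝 (polyMap d p)) := by
  set D := p.totalDegree with hD
  have hev : (fun N : ℕ => ∑ n ∈ range (D+1),
        ((1:ℝ) - (n:ℝ)/((N:ℝ)+1)) • polyMap d (MvPolynomial.homogeneousComponent n p))
      =ᶠ[atTop] (fun N : ℕ => ∑ n ∈ range (N+1),
        ((1:ℝ) - (n:ℝ)/((N:ℝ)+1)) • polyMap d (MvPolynomial.homogeneousComponent n p)) := by
    rw [Filter.eventuallyEq_iff_exists_mem]
    refine ⟨Set.Ici D, Filter.Ici_mem_atTop D, fun N hN => ?_⟩
    apply Finset.sum_subset (Finset.range_subset_range.mpr (by simp only [Set.mem_Ici] at hN; omega))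
    intro x _ hx
    simp only [mem_range] at hx
    have : MvPolynomial.homogeneousComponent x p = 0 := by
      apply MvPolynomial.homogeneousComponent_eq_zero
      omega
    rw [this, map_zero, smul_zero]
  apply Filter.Tendsto.congr' hev
  have hsum : polyMap d p = ∑ n ∈ range (D+1),
      polyMap d (MvPolynomial.homogeneousComponent n p) := by
    rw [← map_sum, MvPolynomial.sum_homogeneousComponent]
  rw [hsum]
  apply tendsto_finset_sum
  intro n _
  have hcoef : Tendsto (fun N : ℕ => (1:ℝ) - (n:ℝ)/((N:ℝ)+1)) atTop (𝓝 1) := by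
    have hdenom : Tendsto (fun N : ℕ => (N:ℝ) + 1) atTop atTop :=
      tendsto_atTop_add_const_right _ _ tendsto_natCast_atTop_atTop
    have h0 : Tendsto (fun N : ℕ => (n:ℝ)/((N:ℝ)+1)) atTop (𝓝 0) :=
      Tendsto.div_atTop tendsto_const_nhds hdenom
    simpa using tendsto_const_nhds.sub h0
  simpa using hcoef.smul_const (polyMap d (MvPolynomial.homogeneousComponent n p))

open Filter Topology in
/-- For every `f` in the ball algebra `B`, the homogeneous
components `f_n` (circle averages) belong to `B`, are restrictions of homogeneous
polynomials of degree `n`, satisfy `‖f_n‖ ≤ ‖f‖`, and the Cesàro means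
`σ_N(f) = Σ_{n=0}^{N} (1 − n/(N+1)) f_n` converge to `f` uniformly on the closed
ball. -/
theorem stmt18 (d : ℕ) (f : C(CBall d, ℂ)) (hf : f ∈ ballAlg d) :
    ∃ g : ℕ → C(CBall d, ℂ),
      (∀ n : ℕ, (∀ z : CBall d, g n z = circAvg d n f z) ∧
        g n ∈ ballAlg d ∧
        (∃ p : MvPolynomial (Fin d) ℂ, p.IsHomogeneous n ∧ g n = polyMap d p) ∧
        ‖g n‖ ≤ ‖f‖) ∧
      Tendsto (fun N : ℕ => ∑ n ∈ Finset.range (N + 1),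
          (1 - (n : ℝ) / ((N : ℝ) + 1)) • g n) atTop (𝓝 f) := by
  have hex := fun n => exists_homog_rep d n f hf
  choose q hq1 hq2 using hex
  have hnorm : ∀ n, ‖polyMap d (q n)‖ ≤ ‖f‖ := fun n =>
    (ContinuousMap.norm_le _ (norm_nonneg f)).mpr fun z => by
      rw [hq2 n z]; exact circAvg_norm_le d n f z
  refine ⟨fun n => polyMap d (q n), fun n => ⟨hq2 n, subset_closure ⟨q n, rfl⟩,
    ⟨q n, hq1 n, rfl⟩, hnorm n⟩, ?_⟩
  rw [Metric.tendsto_atTop]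
  intro ε hε
  obtain ⟨b, hb_mem, hb_dist⟩ := Metric.mem_closure_iff.mp hf (ε/3) (by positivity)
  obtain ⟨p, rfl⟩ := hb_mem
  set h : C(CBall d, ℂ) := f - polyMap d p with hh
  have hhmem : h ∈ ballAlg d := ballAlg_sub_mem d hf (subset_closure ⟨p, rfl⟩)
  have hhnorm : ‖h‖ < ε/3 := by rw [hh, ← dist_eq_norm]; exact hb_dist
  obtain ⟨K, hK⟩ := (Metric.tendsto_atTop.mp (cesaro_poly_tendsto d p)) (ε/3) (by positivity)
  refine ⟨K, fun N hN => ?_⟩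
  have hmid := hK N hN
  set σf : C(CBall d, ℂ) := ∑ n ∈ Finset.range (N+1),
    ((1:ℝ) - (n:ℝ)/((N:ℝ)+1)) • polyMap d (q n) with hσf
  set σp : C(CBall d, ℂ) := ∑ n ∈ Finset.range (N+1),
    ((1:ℝ) - (n:ℝ)/((N:ℝ)+1)) • polyMap d (MvPolynomial.homogeneousComponent n p) with hσp
  have hfirst : ‖σf - σp‖ ≤ ε/3 := by
    refine (ContinuousMap.norm_le _ (by positivity)).mpr fun z => ?_
    have hz : (σf - σp) z = ∑ n ∈ Finset.range (N+1),
        ((1:ℝ) - (n:ℝ)/((N:ℝ)+1)) • circAvg d n h z := by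
      rw [ContinuousMap.sub_apply, hσf, hσp,
        ContinuousMap.sum_apply, ContinuousMap.sum_apply, ← Finset.sum_sub_distrib]
      refine Finset.sum_congr rfl fun n _ => ?_
      rw [ContinuousMap.smul_apply, ContinuousMap.smul_apply, ← smul_sub]
      congr 1
      rw [hq2 n z, ← circAvg_polyMap d n p z]
      exact (circAvg_sub d n f (polyMap d p) z).symm
    rw [hz]
    calc ‖∑ n ∈ Finset.range (N+1), ((1:ℝ) - (n:ℝ)/((N:ℝ)+1)) • circAvg d n h z‖
        ≤ ‖h‖ := cesaro_bound' d N h hhmem z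
      _ ≤ ε/3 := le_of_lt hhnorm
  have hthird : dist (polyMap d p) f < ε/3 := by rw [dist_comm]; exact hb_dist
  calc dist σf f ≤ dist σf σp + dist σp (polyMap d p) + dist (polyMap d p) f :=
        dist_triangle4 _ _ _ _
    _ < ε/3 + ε/3 + ε/3 := by
        have h1 : dist σf σp ≤ ε/3 := by rw [dist_eq_norm]; exact hfirst
        linarith [hmid, hthird, h1]
    _ = ε := by ring
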